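/- Let k be a field, α ∈ k nonzero, and A = A_α the Gasharov–Peeva algebra. Let U be the cokernel of the map A⁶ → A² given by the matrix [[x₃, 0, x₁, x₄, x₂, 0],[−x₂, x₃, −x₄, 0, 0, x₁]], and V = U ⊗_A A/(m², x₅) where m is the maximal ideal of A. Then V has dimension 4 over k, with basis the classes of (1,0), (0,1), (x₁,0), (0,x₂). -/

import Mathlib

set_option synthInstance.maxHeartbeats 1000000
set_option maxHeartbeats 2000000

open MvPolynomial in
/-- The Gasharov–Peeva ideal `I_α ⊆ k[X₁,…,X₅]` (variables indexed `0,…,4`). -/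
noncomputable def gpIdeal (k : Type) [Field k] (α : k) : Ideal (MvPolynomial (Fin 5) k) :=
  Ideal.span {C α * X 0 * X 2 + X 1 * X 2,
    X 0 * X 3 + X 1 * X 3,
    X 2 ^ 2 + C α * X 0 * X 4 - X 1 * X 4,
    X 3 ^ 2 + X 0 * X 4 - X 1 * X 4,
    X 0 ^ 2, X 1 ^ 2, X 2 * X 3, X 2 * X 4, X 3 * X 4, X 4 ^ 2}

/-- The Gasharov–Peeva algebra `A = A_α = k[X₁,…,X₅]/I_α`. -/
noncomputable abbrev GP (k : Type) [Field k] (α : k) : Type :=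
  MvPolynomial (Fin 5) k ⧸ gpIdeal k α

/-- `x i` : the residue class of the variable `X i` in `A_α` (so `x₁ = gpx α 0`, …,
`x₅ = gpx α 4`). -/
noncomputable def gpx {k : Type} [Field k] (α : k) (i : Fin 5) : GP k α :=
  Ideal.Quotient.mk _ (MvPolynomial.X i)

/-- The maximal ideal `m = (x₁,…,x₅)` of `A_α`. -/
noncomputable abbrev gpm (k : Type) [Field k] (α : k) : Ideal (GP k α) :=
  Ideal.span {gpx α 0, gpx α 1, gpx α 2, gpx α 3, gpx α 4}

/-- The submodule of relations defining `V = U ⊗_A A/(m², x₅)`, where `U` is the cokernel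
of the map `A⁶ → A²` with matrix `[[x₃, 0, x₁, x₄, x₂, 0],[−x₂, x₃, −x₄, 0, 0, x₁]]`:
the span of the six columns together with `(m² + (x₅))·A²`. -/
noncomputable abbrev gpVrel (k : Type) [Field k] (α : k) :
    Submodule (GP k α) (Fin 2 → GP k α) :=
  Submodule.span (GP k α)
      {![gpx α 2, -(gpx α 1)], ![0, gpx α 2], ![gpx α 0, -(gpx α 3)],
        ![gpx α 3, 0], ![gpx α 1, 0], ![0, gpx α 0]}
    ⊔ (gpm k α ^ 2 ⊔ Ideal.span {gpx α 4}) • (⊤ : Submodule (GP k α) (Fin 2 → GP k α))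

/-- The `A`-module `V = U ⊗_A A/(m², x₅)`. -/
noncomputable abbrev gpV (k : Type) [Field k] (α : k) : Type :=
  (Fin 2 → GP k α) ⧸ gpVrel k α


namespace GPaux
open MvPolynomial

variable (k : Type) [Field k]

abbrev P5 := MvPolynomial (Fin 5) k

/-- the ideal of polynomials killed by all our functionals -/
noncomputable def T : Ideal (P5 k) where
  carrier := {p | constantCoeff p = 0 ∧ ∀ j : Fin 5, j ≠ 4 → constantCoeff (pderiv j p) = 0}
  add_mem' := by
    rintro a b ⟨ha1, ha2⟩ ⟨hb1, hb2⟩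
    exact ⟨by simp [ha1, hb1], fun j hj => by simp [ha2 j hj, hb2 j hj]⟩
  zero_mem' := by simp
  smul_mem' := by
    rintro c p ⟨h1, h2⟩
    refine ⟨by simp [smul_eq_mul, h1], fun j hj => ?_⟩
    rw [smul_eq_mul, pderiv_mul]
    simp [h1, h2 j hj]

lemma mem_T {p : P5 k} (hp : p ∈ T k) : constantCoeff p = 0 ∧
    ∀ j : Fin 5, j ≠ 4 → constantCoeff (pderiv j p) = 0 := hp

lemma mul_mem_T {p q : P5 k} (hp : constantCoeff p = 0) (hq : constantCoeff q = 0) :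
    p * q ∈ T k := by
  refine ⟨by simp [hp, hq], fun j hj => ?_⟩
  rw [pderiv_mul]
  simp [hp, hq]

noncomputable def M : Ideal (P5 k) := Ideal.span {X 0, X 1, X 2, X 3, X 4}

lemma X_mem_M (i : Fin 5) : (X i : P5 k) ∈ M k := by
  fin_cases i <;> exact Ideal.subset_span (by simp)

lemma cc_of_mem_M {p : P5 k} (hp : p ∈ M k) : constantCoeff p = 0 := by
  have : M k ≤ RingHom.ker (constantCoeff (σ := Fin 5) (R := k)) := by
    rw [M, Ideal.span_le]
    intro q hq
    simp only [Set.mem_insert_iff, Set.mem_singleton_iff] at hq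
    rcases hq with rfl|rfl|rfl|rfl|rfl <;> simp [RingHom.mem_ker]
  exact this hp

lemma Msq_le_T : M k ^ 2 ≤ T k := by
  rw [pow_two]
  exact Ideal.mul_le.mpr fun p hp q hq => mul_mem_T k (cc_of_mem_M k hp) (cc_of_mem_M k hq)

lemma J0_le_T : M k ^ 2 ⊔ Ideal.span {X 4} ≤ T k := by
  refine sup_le (Msq_le_T k) (Ideal.span_le.mpr ?_)
  rintro q rfl
  refine ⟨by simp, fun j hj => ?_⟩
  rw [pderiv_X_of_ne (Ne.symm hj)]
  simp

lemma gpIdeal_le_Msq (α : k) : gpIdeal k α ≤ M k ^ 2 := by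
  rw [gpIdeal, Ideal.span_le]
  intro q hq
  simp only [Set.mem_insert_iff, Set.mem_singleton_iff] at hq
  have h : ∀ i j : Fin 5, (X i * X j : P5 k) ∈ M k ^ 2 := fun i j => by
    rw [pow_two]; exact Ideal.mul_mem_mul (X_mem_M k i) (X_mem_M k j)
  rcases hq with rfl|rfl|rfl|rfl|rfl|rfl|rfl|rfl|rfl|rfl
  · exact add_mem (by rw [mul_assoc]; exact Ideal.mul_mem_left _ _ (h 0 2)) (h 1 2)
  · exact add_mem (h 0 3) (h 1 3)
  · exact sub_mem (add_mem (by rw [pow_two (X 2 : P5 k)]; exact h 2 2)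
      (by rw [mul_assoc]; exact Ideal.mul_mem_left _ _ (h 0 4))) (h 1 4)
  · exact sub_mem (add_mem (by rw [pow_two (X 3 : P5 k)]; exact h 3 3) (h 0 4)) (h 1 4)
  · rw [pow_two (X 0 : P5 k)]; exact h 0 0
  · rw [pow_two (X 1 : P5 k)]; exact h 1 1
  · exact h 2 3
  · exact h 2 4
  · exact h 3 4
  · rw [pow_two (X 4 : P5 k)]; exact h 4 4



variable {k}

/-- lift a `k`-linear functional vanishing on the ideal to the quotient -/
noncomputable def liftF (α : k) (F : P5 k →ₗ[k] k) (hF : ∀ p ∈ gpIdeal k α, F p = 0) :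
    GP k α →ₗ[k] k :=
  (((gpIdeal k α).restrictScalars k).liftQ F (fun p hp => hF p hp)) ∘ₗ
    (Submodule.Quotient.restrictScalarsEquiv k (gpIdeal k α)).symm.toLinearMap

lemma liftF_mk (α : k) (F : P5 k →ₗ[k] k) (hF : ∀ p ∈ gpIdeal k α, F p = 0) (p : P5 k) :
    liftF α F hF (Ideal.Quotient.mk (gpIdeal k α) p) = F p := by
  have : (Ideal.Quotient.mk (gpIdeal k α)) p = Submodule.Quotient.mk p := rfl
  rw [liftF, LinearMap.comp_apply, this, LinearEquiv.coe_toLinearMap,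
    Submodule.Quotient.restrictScalarsEquiv_symm_mk]
  rfl

noncomputable def ccF : P5 k →ₗ[k] k :=
  { toFun := constantCoeff
    map_add' := fun a b => by simp
    map_smul' := fun c p => by simp }

noncomputable def ddF (j : Fin 5) : P5 k →ₗ[k] k :=
  ccF ∘ₗ ((pderiv j : Derivation k (P5 k) (P5 k)) : P5 k →ₗ[k] P5 k)

@[simp] lemma ccF_apply (p : P5 k) : ccF p = constantCoeff p := rfl
@[simp] lemma ddF_apply (j : Fin 5) (p : P5 k) : ddF j p = constantCoeff (pderiv j p) := rfl

lemma ccF_vanish (α : k) : ∀ p ∈ gpIdeal k α, ccF p = 0 :=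
  fun p hp => (mem_T k (Msq_le_T k (gpIdeal_le_Msq k α hp))).1

lemma ddF_vanish (α : k) (j : Fin 5) (hj : j ≠ 4) : ∀ p ∈ gpIdeal k α, ddF j p = 0 :=
  fun p hp => (mem_T k (Msq_le_T k (gpIdeal_le_Msq k α hp))).2 j hj

/-- the five lifted functionals -/
noncomputable def Ef (α : k) : GP k α →ₗ[k] k := liftF α ccF (ccF_vanish α)
noncomputable def Df (α : k) (j : Fin 5) (hj : j ≠ 4) : GP k α →ₗ[k] k :=
  liftF α (ddF j) (ddF_vanish α j hj)

@[simp] lemma Ef_mk (α : k) (p : P5 k) :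
    Ef α (Ideal.Quotient.mk (gpIdeal k α) p) = constantCoeff p := liftF_mk _ _ _ _

@[simp] lemma Df_mk (α : k) (j : Fin 5) (hj : j ≠ 4) (p : P5 k) :
    Df α j hj (Ideal.Quotient.mk (gpIdeal k α) p) = constantCoeff (pderiv j p) :=
  liftF_mk _ _ _ _


end GPaux


namespace GPaux
open MvPolynomial

variable {k : Type} [Field k]

lemma cc_mul_X (q : P5 k) (i : Fin 5) : constantCoeff (q * X i) = 0 := by simp

lemma cc_pderiv_mul_X (q : P5 k) (i j : Fin 5) :
    constantCoeff (pderiv j (q * X i)) = if i = j then constantCoeff q else 0 := by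
  rw [pderiv_mul]
  by_cases h : i = j
  · subst h; simp
  · rw [pderiv_X_of_ne h]
    simp [h]

noncomputable def Phi (α : k) : (Fin 2 → GP k α) →ₗ[k] (Fin 4 → k) :=
  LinearMap.pi
    ![Ef α ∘ₗ LinearMap.proj 0, Ef α ∘ₗ LinearMap.proj 1,
      Df α 0 (by decide) ∘ₗ LinearMap.proj 0 + Df α 3 (by decide) ∘ₗ LinearMap.proj 1,
      Df α 2 (by decide) ∘ₗ LinearMap.proj 0 + Df α 1 (by decide) ∘ₗ LinearMap.proj 1]

lemma Phi_apply (α : k) (v : Fin 2 → GP k α) :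
    Phi α v = ![Ef α (v 0), Ef α (v 1),
      Df α 0 (by decide) (v 0) + Df α 3 (by decide) (v 1),
      Df α 2 (by decide) (v 0) + Df α 1 (by decide) (v 1)] := by
  funext j
  fin_cases j <;> simp [Phi, LinearMap.pi_apply]

lemma Ef_mul_x (α : k) (q : P5 k) (i : Fin 5) :
    Ef α (Ideal.Quotient.mk (gpIdeal k α) q * gpx α i) = 0 := by
  rw [gpx, ← map_mul, Ef_mk, cc_mul_X]

lemma Df_mul_x (α : k) (q : P5 k) (i j : Fin 5) (hj : j ≠ 4) :
    Df α j hj (Ideal.Quotient.mk (gpIdeal k α) q * gpx α i)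
      = if i = j then constantCoeff q else 0 := by
  rw [gpx, ← map_mul, Df_mk, cc_pderiv_mul_X]

lemma Ef_mul_negx (α : k) (q : P5 k) (i : Fin 5) :
    Ef α (Ideal.Quotient.mk (gpIdeal k α) q * -gpx α i) = 0 := by
  have h : Ideal.Quotient.mk (gpIdeal k α) q * -gpx α i
      = -(Ideal.Quotient.mk (gpIdeal k α) q * gpx α i) := by ring
  rw [h, map_neg, Ef_mul_x, neg_zero]

lemma Df_mul_negx (α : k) (q : P5 k) (i j : Fin 5) (hj : j ≠ 4) :
    Df α j hj (Ideal.Quotient.mk (gpIdeal k α) q * -gpx α i)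
      = if i = j then -constantCoeff q else 0 := by
  have h : Ideal.Quotient.mk (gpIdeal k α) q * -gpx α i
      = -(Ideal.Quotient.mk (gpIdeal k α) q * gpx α i) := by ring
  rw [h, map_neg, Df_mul_x]
  split <;> simp

noncomputable def Kmod (α : k) : Submodule (GP k α) (Fin 2 → GP k α) where
  carrier := {v | ∀ a : GP k α, Phi α (a • v) = 0}
  add_mem' := fun {u v} hu hv a => by rw [smul_add, map_add, hu a, hv a, add_zero]
  zero_mem' := fun a => by rw [smul_zero, map_zero]
  smul_mem' := fun c v hv a => by rw [smul_smul]; exact hv (a * c)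

lemma gpm_eq_map (α : k) :
    gpm k α = Ideal.map (Ideal.Quotient.mk (gpIdeal k α)) (M k) := by
  rw [M, Ideal.map_span]
  rw [Set.image_insert_eq, Set.image_insert_eq, Set.image_insert_eq, Set.image_insert_eq,
    Set.image_singleton]
  rfl

lemma fun_vanish_J (α : k) {u : GP k α}
    (hu : u ∈ gpm k α ^ 2 ⊔ Ideal.span {gpx α 4}) :
    Ef α u = 0 ∧ ∀ (j : Fin 5) (hj : j ≠ 4), Df α j hj u = 0 := by
  have hx4 : Ideal.span {gpx α 4} =
      Ideal.map (Ideal.Quotient.mk (gpIdeal k α)) (Ideal.span {(X 4 : P5 k)}) := by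
    rw [Ideal.map_span, Set.image_singleton]; rfl
  rw [gpm_eq_map α, ← Ideal.map_pow, hx4, ← Ideal.map_sup] at hu
  obtain ⟨p, hp, rfl⟩ := (Ideal.mem_map_iff_of_surjective _ Ideal.Quotient.mk_surjective).mp hu
  have hT := mem_T k (J0_le_T k hp)
  exact ⟨by rw [Ef_mk]; exact hT.1, fun j hj => by rw [Df_mk]; exact hT.2 j hj⟩

lemma Phi_smul_J (α : k) {c : GP k α}
    (hc : c ∈ gpm k α ^ 2 ⊔ Ideal.span {gpx α 4}) (v : Fin 2 → GP k α) :
    Phi α (c • v) = 0 := by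
  have h : ∀ i : Fin 2, (c • v) i = c * v i := fun i => rfl
  have hmem : ∀ i : Fin 2, c * v i ∈ gpm k α ^ 2 ⊔ Ideal.span {gpx α 4} :=
    fun i => Ideal.mul_mem_right _ _ hc
  rw [Phi_apply]
  funext j
  fin_cases j <;>
    simp [h, (fun_vanish_J α (hmem 0)).1, (fun_vanish_J α (hmem 1)).1,
      (fun_vanish_J α (hmem 0)).2, (fun_vanish_J α (hmem 1)).2]

lemma Phi_vanish_rel (α : k) : ∀ v ∈ gpVrel k α, Phi α v = 0 := by
  have hle : gpVrel k α ≤ Kmod α := by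
    refine sup_le ?_ ?_
    · rw [Submodule.span_le]
      intro g hg a
      obtain ⟨q, rfl⟩ := Ideal.Quotient.mk_surjective a
      simp only [Set.mem_insert_iff, Set.mem_singleton_iff] at hg
      have hsmul : ∀ u w : GP k α,
          (Ideal.Quotient.mk (gpIdeal k α) q) • ![u, w]
            = ![Ideal.Quotient.mk (gpIdeal k α) q * u,
                Ideal.Quotient.mk (gpIdeal k α) q * w] := by
        intro u w; funext i; fin_cases i <;> rfl
      rcases hg with rfl|rfl|rfl|rfl|rfl|rfl <;>
        · rw [hsmul, Phi_apply]
          funext j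
          fin_cases j <;>
            simp [Ef_mul_x, Df_mul_x, Ef_mul_negx, Df_mul_negx]
    · refine Submodule.smul_le.mpr fun r hr n _ a => ?_
      rw [smul_smul]
      exact Phi_smul_J α (Ideal.mul_mem_left _ a hr) n
  intro v hv
  have := hle hv 1
  rwa [one_smul] at this

end GPaux

namespace GPaux
open MvPolynomial

variable {k : Type} [Field k]

noncomputable def Psi (α : k) : gpV k α →ₗ[k] (Fin 4 → k) :=
  (((gpVrel k α).restrictScalars k).liftQ (Phi α)
      (fun v hv => Phi_vanish_rel α v hv)) ∘ₗ
    (Submodule.Quotient.restrictScalarsEquiv k (gpVrel k α)).symm.toLinearMap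

lemma Psi_mk (α : k) (v : Fin 2 → GP k α) :
    Psi α (Submodule.Quotient.mk v) = Phi α v := by
  rw [Psi, LinearMap.comp_apply, LinearEquiv.coe_toLinearMap,
    Submodule.Quotient.restrictScalarsEquiv_symm_mk]
  rfl

@[simp] lemma Ef_one (α : k) : Ef α (1 : GP k α) = 1 := by
  rw [← map_one (Ideal.Quotient.mk (gpIdeal k α)), Ef_mk]; simp

@[simp] lemma Df_one (α : k) (j : Fin 5) (hj : j ≠ 4) : Df α j hj (1 : GP k α) = 0 := by
  rw [← map_one (Ideal.Quotient.mk (gpIdeal k α)), Df_mk]; simp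

@[simp] lemma Ef_x (α : k) (i : Fin 5) : Ef α (gpx α i) = 0 := by
  rw [gpx, Ef_mk]; simp

@[simp] lemma Df_x (α : k) (i j : Fin 5) (hj : j ≠ 4) :
    Df α j hj (gpx α i) = if i = j then 1 else 0 := by
  rw [gpx, Df_mk]
  by_cases h : i = j
  · subst h; simp
  · rw [pderiv_X_of_ne h]; simp [h]

lemma Psi_b0 (α : k) : Psi α (Submodule.Quotient.mk ![1, 0]) = ![1, 0, 0, 0] := by
  rw [Psi_mk, Phi_apply]
  funext j; fin_cases j <;> simp

lemma Psi_b1 (α : k) : Psi α (Submodule.Quotient.mk ![0, 1]) = ![0, 1, 0, 0] := by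
  rw [Psi_mk, Phi_apply]
  funext j; fin_cases j <;> simp

lemma Psi_b2 (α : k) : Psi α (Submodule.Quotient.mk ![gpx α 0, 0]) = ![0, 0, 1, 0] := by
  rw [Psi_mk, Phi_apply]
  funext j; fin_cases j <;> simp

lemma Psi_b3 (α : k) : Psi α (Submodule.Quotient.mk ![0, gpx α 1]) = ![0, 0, 0, 1] := by
  rw [Psi_mk, Phi_apply]
  funext j; fin_cases j <;> simp

end GPaux

namespace GPaux
open MvPolynomial

variable {k : Type} [Field k]

noncomputable def Wmod (α : k) : Submodule k (Fin 2 → GP k α) :=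
  Submodule.span k {![1, 0], ![0, 1], ![gpx α 0, 0], ![0, gpx α 1]} ⊔
    (gpVrel k α).restrictScalars k

lemma rel_mem_W (α : k) {v : Fin 2 → GP k α} (hv : v ∈ gpVrel k α) : v ∈ Wmod α :=
  le_sup_right (α := Submodule k (Fin 2 → GP k α)) hv

lemma bgen_mem_W (α : k) {v : Fin 2 → GP k α}
    (hv : v ∈ ({![1, 0], ![0, 1], ![gpx α 0, 0], ![0, gpx α 1]} :
      Set (Fin 2 → GP k α))) : v ∈ Wmod α :=
  le_sup_left (α := Submodule k (Fin 2 → GP k α)) (Submodule.subset_span hv)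

lemma J_smul_mem_rel (α : k) {g : GP k α}
    (hg : g ∈ gpm k α ^ 2 ⊔ Ideal.span {gpx α 4}) (v : Fin 2 → GP k α) :
    g • v ∈ gpVrel k α :=
  le_sup_right (α := Submodule (GP k α) (Fin 2 → GP k α))
    (Submodule.smul_mem_smul hg Submodule.mem_top)

lemma col_left_mem_rel (α : k) {g : GP k α}
    (hg : g ∈ gpm k α ^ 2 ⊔ Ideal.span {gpx α 4}) : (![g, 0] : Fin 2 → GP k α) ∈ gpVrel k α := by
  have h : (![g, 0] : Fin 2 → GP k α) = g • ![1, 0] := by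
    funext i; fin_cases i <;> simp
  rw [h]; exact J_smul_mem_rel α hg _

lemma col_right_mem_rel (α : k) {g : GP k α}
    (hg : g ∈ gpm k α ^ 2 ⊔ Ideal.span {gpx α 4}) : (![0, g] : Fin 2 → GP k α) ∈ gpVrel k α := by
  have h : (![0, g] : Fin 2 → GP k α) = g • ![0, 1] := by
    funext i; fin_cases i <;> simp
  rw [h]; exact J_smul_mem_rel α hg _

lemma X_mul_X_mem (i j : Fin 5) : (X i * X j : P5 k) ∈ M k ^ 2 := by
  rw [pow_two]; exact Ideal.mul_mem_mul (X_mem_M k i) (X_mem_M k j)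

lemma mono_mem_Msq {d : Fin 5 →₀ ℕ} (h1 : d ≠ 0)
    (h2 : ∀ i : Fin 5, d ≠ Finsupp.single i 1) : (monomial d (1 : k)) ∈ M k ^ 2 := by
  obtain ⟨i, hi⟩ := Finsupp.support_nonempty_iff.mpr h1
  have hdi : 1 ≤ d i := Nat.one_le_iff_ne_zero.mpr (Finsupp.mem_support_iff.mp hi)
  -- find a second index j (with multiplicity)
  have hj : ∃ j : Fin 5, 1 ≤ ((d - Finsupp.single i 1 : Fin 5 →₀ ℕ)) j := by
    by_contra hc
    push_neg at hc
    apply h2 i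
    ext l
    have h' := hc l
    rw [Finsupp.tsub_apply, Finsupp.single_apply] at h'
    rw [Finsupp.single_apply]
    by_cases hl : i = l
    · rw [if_pos hl] at h' ⊢
      subst hl; omega
    · rw [if_neg hl] at h' ⊢
      omega
  obtain ⟨j, hdj⟩ := hj
  have hdj' : 1 ≤ d j - (if i = j then 1 else 0) := by
    rw [Finsupp.tsub_apply, Finsupp.single_apply] at hdj; exact hdj
  have key : monomial d (1 : k)
      = monomial (d - Finsupp.single i 1 - Finsupp.single j 1) 1 * (X i * X j) := by
    have hd : (d - Finsupp.single i 1 - Finsupp.single j 1)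
        + (Finsupp.single i 1 + Finsupp.single j 1) = d := by
      ext l
      simp only [Finsupp.add_apply, Finsupp.tsub_apply, Finsupp.single_apply]
      split_ifs at hdj' ⊢ <;> subst_vars <;> (try simp_all) <;> omega
    rw [X, X, monomial_mul, monomial_mul, one_mul, one_mul, hd]
  rw [key]
  exact Ideal.mul_mem_left _ _ (X_mul_X_mem i j)

end GPaux

namespace GPaux
open MvPolynomial

variable {k : Type} [Field k]

lemma gen_rel_mem (α : k) {v : Fin 2 → GP k α}
    (hv : v ∈ ({![gpx α 2, -(gpx α 1)], ![0, gpx α 2], ![gpx α 0, -(gpx α 3)],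
        ![gpx α 3, 0], ![gpx α 1, 0], ![0, gpx α 0]} : Set (Fin 2 → GP k α))) :
    v ∈ gpVrel k α :=
  le_sup_left (α := Submodule (GP k α) (Fin 2 → GP k α)) (Submodule.subset_span hv)

lemma xi_mem_W (α : k) (i : Fin 5) :
    (![gpx α i, 0] ∈ Wmod α) ∧ (![0, gpx α i] ∈ Wmod α) := by
  have hg4 : gpx α 4 ∈ gpm k α ^ 2 ⊔ Ideal.span {gpx α 4} :=
    le_sup_right (α := Ideal (GP k α)) (Ideal.subset_span rfl)
  fin_cases i
  · exact ⟨bgen_mem_W α (by simp), rel_mem_W α (gen_rel_mem α (by simp))⟩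
  · exact ⟨rel_mem_W α (gen_rel_mem α (by simp)), bgen_mem_W α (by simp)⟩
  · constructor
    · show (![gpx α 2, 0] : Fin 2 → GP k α) ∈ Wmod α
      have h : (![gpx α 2, 0] : Fin 2 → GP k α)
          = ![gpx α 2, -(gpx α 1)] + ![0, gpx α 1] := by
        funext l; fin_cases l <;> simp
      rw [h]
      exact add_mem (rel_mem_W α (gen_rel_mem α (by simp))) (bgen_mem_W α (by simp))
    · exact rel_mem_W α (gen_rel_mem α (by simp))
  · constructor
    · exact rel_mem_W α (gen_rel_mem α (by simp))
    · show (![0, gpx α 3] : Fin 2 → GP k α) ∈ Wmod α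
      have h : (![0, gpx α 3] : Fin 2 → GP k α)
          = ![gpx α 0, 0] - ![gpx α 0, -(gpx α 3)] := by
        funext l; fin_cases l <;> simp
      rw [h]
      exact sub_mem (bgen_mem_W α (by simp)) (rel_mem_W α (gen_rel_mem α (by simp)))
  · exact ⟨rel_mem_W α (col_left_mem_rel α hg4), rel_mem_W α (col_right_mem_rel α hg4)⟩

lemma mono_mem_W (α : k) (d : Fin 5 →₀ ℕ) :
    (![Ideal.Quotient.mk (gpIdeal k α) (monomial d 1), 0] ∈ Wmod α) ∧
    (![0, Ideal.Quotient.mk (gpIdeal k α) (monomial d 1)] ∈ Wmod α) := by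
  by_cases h0 : d = 0
  · subst h0
    have h1 : (Ideal.Quotient.mk (gpIdeal k α)) (monomial 0 (1 : k)) = 1 := by
      rw [monomial_zero', C_1, map_one]
    rw [h1]
    exact ⟨bgen_mem_W α (by simp), bgen_mem_W α (by simp)⟩
  by_cases hs : ∃ i, d = Finsupp.single i 1
  · obtain ⟨i, rfl⟩ := hs
    have hX : (Ideal.Quotient.mk (gpIdeal k α)) (monomial (Finsupp.single i 1) (1 : k))
        = gpx α i := by rw [← X]; rfl
    rw [hX]
    exact xi_mem_W α i
  · push_neg at hs
    have hg : (Ideal.Quotient.mk (gpIdeal k α)) (monomial d (1 : k))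
        ∈ gpm k α ^ 2 ⊔ Ideal.span {gpx α 4} := by
      refine le_sup_left (α := Ideal (GP k α)) ?_
      rw [gpm_eq_map α, ← Ideal.map_pow]
      exact Ideal.mem_map_of_mem _ (mono_mem_Msq h0 hs)
    exact ⟨rel_mem_W α (col_left_mem_rel α hg), rel_mem_W α (col_right_mem_rel α hg)⟩

lemma cols_mem_W (α : k) (p : P5 k) :
    (![Ideal.Quotient.mk (gpIdeal k α) p, 0] ∈ Wmod α) ∧
    (![0, Ideal.Quotient.mk (gpIdeal k α) p] ∈ Wmod α) := by
  have hp : p ∈ Submodule.span k (Set.range fun d : Fin 5 →₀ ℕ => (monomial d (1 : k))) := by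
    nth_rewrite 1 [p.as_sum]
    refine Submodule.sum_mem _ fun d _ => ?_
    have h : monomial d (coeff d p) = (coeff d p) • monomial d (1 : k) := by
      rw [smul_monomial, smul_eq_mul, mul_one]
    rw [h]
    exact Submodule.smul_mem _ _ (Submodule.subset_span ⟨d, rfl⟩)
  refine Submodule.span_induction
    (p := fun q _ => (![Ideal.Quotient.mk (gpIdeal k α) q, 0] ∈ Wmod α) ∧
      (![0, Ideal.Quotient.mk (gpIdeal k α) q] ∈ Wmod α)) ?_ ?_ ?_ ?_ hp
  · rintro q ⟨d, rfl⟩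
    exact mono_mem_W α d
  · show (![Ideal.Quotient.mk (gpIdeal k α) 0, 0] ∈ Wmod α) ∧
      (![0, Ideal.Quotient.mk (gpIdeal k α) 0] ∈ Wmod α)
    have hz : (![(0 : GP k α), 0] : Fin 2 → GP k α) = 0 := by
      funext l; fin_cases l <;> rfl
    rw [map_zero, hz]
    exact ⟨zero_mem _, zero_mem _⟩
  · intro a b _ _ ha hb
    show (![Ideal.Quotient.mk (gpIdeal k α) (a + b), 0] ∈ Wmod α) ∧
      (![0, Ideal.Quotient.mk (gpIdeal k α) (a + b)] ∈ Wmod α)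
    rw [map_add]
    constructor
    · have h : (![Ideal.Quotient.mk (gpIdeal k α) a + Ideal.Quotient.mk (gpIdeal k α) b, 0]
          : Fin 2 → GP k α)
          = ![Ideal.Quotient.mk (gpIdeal k α) a, 0]
            + ![Ideal.Quotient.mk (gpIdeal k α) b, 0] := by
        funext l; fin_cases l <;> simp
      rw [h]; exact add_mem ha.1 hb.1
    · have h : (![0, Ideal.Quotient.mk (gpIdeal k α) a + Ideal.Quotient.mk (gpIdeal k α) b]
          : Fin 2 → GP k α)
          = ![0, Ideal.Quotient.mk (gpIdeal k α) a]
            + ![0, Ideal.Quotient.mk (gpIdeal k α) b] := by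
        funext l; fin_cases l <;> simp
      rw [h]; exact add_mem ha.2 hb.2
  · intro c q _ hq
    show (![Ideal.Quotient.mk (gpIdeal k α) (c • q), 0] ∈ Wmod α) ∧
      (![0, Ideal.Quotient.mk (gpIdeal k α) (c • q)] ∈ Wmod α)
    have hmk : Ideal.Quotient.mk (gpIdeal k α) (c • q)
        = c • Ideal.Quotient.mk (gpIdeal k α) q := by
      rw [← Ideal.Quotient.mkₐ_eq_mk k]
      exact map_smul _ c q
    rw [hmk]
    constructor
    · have h : (![c • Ideal.Quotient.mk (gpIdeal k α) q, 0] : Fin 2 → GP k α)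
          = c • ![Ideal.Quotient.mk (gpIdeal k α) q, 0] := by
        funext l; fin_cases l <;> simp
      rw [h]; exact Submodule.smul_mem _ _ hq.1
    · have h : (![0, c • Ideal.Quotient.mk (gpIdeal k α) q] : Fin 2 → GP k α)
          = c • ![0, Ideal.Quotient.mk (gpIdeal k α) q] := by
        funext l; fin_cases l <;> simp
      rw [h]; exact Submodule.smul_mem _ _ hq.2

end GPaux

/-- `V` is `4`-dimensional over `k`, with basis the classes of
`(1,0), (0,1), (x₁,0), (0,x₂)`. -/
theorem stmt12 (k : Type) [Field k] (α : k) (hα : α ≠ 0) :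
    Module.finrank k (gpV k α) = 4 ∧
    (let b : Fin 4 → gpV k α :=
      ![Submodule.Quotient.mk ![1, 0], Submodule.Quotient.mk ![0, 1],
        Submodule.Quotient.mk ![gpx α 0, 0], Submodule.Quotient.mk ![0, gpx α 1]];
      LinearIndependent k b ∧ Submodule.span k (Set.range b) = ⊤) := by
  classical
  set bb : Fin 4 → gpV k α :=
    ![Submodule.Quotient.mk ![1, 0], Submodule.Quotient.mk ![0, 1],
      Submodule.Quotient.mk ![gpx α 0, 0], Submodule.Quotient.mk ![0, gpx α 1]] with hbb
  have hLI : LinearIndependent k bb := by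
    rw [Fintype.linearIndependent_iff]
    intro g hg
    have h2 := congrArg (GPaux.Psi α) hg
    rw [map_sum, map_zero, Fin.sum_univ_four] at h2
    simp only [hbb, Matrix.cons_val_zero, Matrix.cons_val_one, Matrix.head_cons,
      Matrix.cons_val_two, Matrix.tail_cons, Matrix.cons_val_three, map_add,
      map_smul, GPaux.Psi_b0, GPaux.Psi_b1, GPaux.Psi_b2, GPaux.Psi_b3] at h2
    intro i
    have h3 := congrFun h2 i
    fin_cases i <;>
      simpa [Pi.add_apply, Pi.smul_apply, smul_eq_mul] using h3
  have hspan : Submodule.span k (Set.range bb) = ⊤ := by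
    rw [eq_top_iff]
    rintro x -
    obtain ⟨v, rfl⟩ := Submodule.Quotient.mk_surjective (gpVrel k α) x
    have hvW : v ∈ GPaux.Wmod α := by
      have hv : v = ![v 0, 0] + ![0, v 1] := by
        funext l; fin_cases l <;> simp
      obtain ⟨p0, hp0⟩ := Ideal.Quotient.mk_surjective (v 0)
      obtain ⟨p1, hp1⟩ := Ideal.Quotient.mk_surjective (v 1)
      rw [hv, ← hp0, ← hp1]
      exact add_mem (GPaux.cols_mem_W α p0).1 (GPaux.cols_mem_W α p1).2
    rw [GPaux.Wmod] at hvW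
    obtain ⟨s, hs, r, hr, rfl⟩ := Submodule.mem_sup.mp hvW
    have hmkr : (Submodule.Quotient.mk (s + r) : gpV k α) = Submodule.Quotient.mk s := by
      have h1 : (Submodule.Quotient.mk (s + r) : gpV k α)
          = Submodule.Quotient.mk s + Submodule.Quotient.mk r := by
        rw [Submodule.Quotient.mk_add]
      have hr' : r ∈ gpVrel k α := hr
      rw [h1, (Submodule.Quotient.mk_eq_zero _).mpr hr', add_zero]
    rw [hmkr]
    refine Submodule.span_induction
      (p := fun u _ => (Submodule.Quotient.mk u : gpV k α) ∈ Submodule.span k (Set.range bb))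
      ?_ ?_ ?_ ?_ hs
    · intro u hu
      simp only [Set.mem_insert_iff, Set.mem_singleton_iff] at hu
      rcases hu with rfl|rfl|rfl|rfl
      · exact Submodule.subset_span ⟨0, rfl⟩
      · exact Submodule.subset_span ⟨1, rfl⟩
      · exact Submodule.subset_span ⟨2, rfl⟩
      · exact Submodule.subset_span ⟨3, rfl⟩
    · show (Submodule.Quotient.mk (0 : Fin 2 → GP k α) : gpV k α)
        ∈ Submodule.span k (Set.range bb)
      simpa using Submodule.zero_mem _
    · intro a b _ _ ha hb
      show (Submodule.Quotient.mk (a + b) : gpV k α) ∈ Submodule.span k (Set.range bb)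
      rw [Submodule.Quotient.mk_add]
      exact add_mem ha hb
    · intro c u _ hu
      show (Submodule.Quotient.mk (c • u) : gpV k α) ∈ Submodule.span k (Set.range bb)
      rw [Submodule.Quotient.mk_smul]
      exact Submodule.smul_mem _ _ hu
  have hfr : Module.finrank k (gpV k α) = 4 := by
    rw [Module.finrank_eq_card_basis (Module.Basis.mk hLI hspan.ge)]
    simp
  exact ⟨hfr, hLI, hspan⟩
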